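/- Replacing repeated visits to the same location by a single visit at the last repeated period preserves the total reward, for a single-facility schedule with loyal customers and spread factor 1. -/

import Mathlib

/-- `capB Jset sched j s` : whether customer `j` is captured at period `s` under the
single-facility schedule `sched` (the open location, if any, captures `j`). -/
def capB {I C : Type*} [DecidableEq C] (Jset : I → Finset C)
    (sched : ℕ → Option I) (j : C) (s : ℕ) : Bool :=
  match sched s with
  | none => false
  | some i => decide (j ∈ Jset i)

/-- Previous-capture time `τ(j,t)`: the largest period `t' < t` (with `t' ≥ 1`) at which
customer `j` was captured, or `0` if none. -/
def prevCap {I C : Type*} [DecidableEq C] (Jset : I → Finset C)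
    (sched : ℕ → Option I) (j : C) (t : ℕ) : ℕ :=
  ((Finset.Ico 1 t).filter (fun s => capB Jset sched j s = true)).sup id

/-- Total reward of a single-facility schedule with spread factor 1: at each period `t`
with an open location `i`, each captured customer `j ∈ J(i)` contributes
`r_i · ∑_{s = τ(j,t)+1}^{t} d^s_j`. -/
def reward {I C : Type*} [DecidableEq C] (T : ℕ) (Jset : I → Finset C)
    (r : I → ℝ) (d : ℕ → C → ℝ) (sched : ℕ → Option I) : ℝ :=
  ∑ t ∈ Finset.Icc 1 T, ((sched t).elim 0 (fun i =>
    r i * ∑ j ∈ Jset i, ∑ s ∈ Finset.Icc (prevCap Jset sched j t + 1) t, d s j))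

/-- Partition lemma: intervals `(p t, t]` for `t ∈ T'` partition `[1, max T']`. -/
lemma partition_sum (T' : Finset ℕ) (hne : T'.Nonempty) (h1 : ∀ t ∈ T', 1 ≤ t)
    (f : ℕ → ℝ) :
    ∑ t ∈ T', ∑ s ∈ Finset.Icc (((Finset.Ico 1 t).filter (· ∈ T')).sup id + 1) t, f s
      = ∑ s ∈ Finset.Icc 1 (T'.max' hne), f s := by
  classical
  set p : ℕ → ℕ := fun t => ((Finset.Ico 1 t).filter (· ∈ T')).sup id with hp
  have hple : ∀ {u t : ℕ}, u ∈ T' → u < t → u ≤ p t := by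
    intro u t hu hut
    exact Finset.le_sup (f := id) (Finset.mem_filter.2 ⟨Finset.mem_Ico.2 ⟨h1 u hu, hut⟩, hu⟩)
  have hdisj : (↑T' : Set ℕ).PairwiseDisjoint
      (fun t => Finset.Icc (p t + 1) t) := by
    intro a ha b hb hab
    wlog h : a < b generalizing a b
    · exact (this hb ha hab.symm (by omega)).symm
    · refine Finset.disjoint_left.2 fun s hs hs' => ?_
      have h1s := Finset.mem_Icc.1 hs
      have h2s := Finset.mem_Icc.1 hs'
      have : a ≤ p b := hple ha h
      omega
  rw [← Finset.sum_biUnion hdisj]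
  congr 1
  ext s
  simp only [Finset.mem_biUnion, Finset.mem_Icc]
  constructor
  · rintro ⟨t, ht, hs1, hs2⟩
    exact ⟨by omega, le_trans hs2 (Finset.le_max' _ _ ht)⟩
  · rintro ⟨hs1, hs2⟩
    have hne2 : ((T'.filter (fun u => s ≤ u))).Nonempty :=
      ⟨T'.max' hne, Finset.mem_filter.2 ⟨T'.max'_mem hne, hs2⟩⟩
    set t := (T'.filter (fun u => s ≤ u)).min' hne2 with htdef
    have htmem := Finset.min'_mem _ hne2
    have ht' : t ∈ T' := (Finset.mem_filter.1 htmem).1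
    have hst : s ≤ t := (Finset.mem_filter.1 htmem).2
    refine ⟨t, ht', ?_, hst⟩
    -- need p t + 1 ≤ s, i.e. p t < s
    have : p t < s := by
      apply Finset.sup_lt_iff (show (⊥:ℕ) < s from Nat.bot_eq_zero ▸ (by omega : 0 < s)) |>.2
      intro u hu
      have hu' := Finset.mem_filter.1 hu
      have huT := hu'.2
      have hut : u < t := (Finset.mem_Ico.1 hu'.1).2
      by_contra hc
      push_neg at hc
      have : t ≤ u := Finset.min'_le _ u (Finset.mem_filter.2 ⟨huT, hc⟩)
      omega
    omega

/-- With loyal customers (pairwise disjoint capture sets) and spread factor 1, replacing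
the repeated visits of a location `i'` (scheduled at the set of periods `T'`, `|T'| ≥ 2`)
by a single visit at the last of those periods preserves the total reward. -/
theorem stmt_3 {I C : Type*} [DecidableEq I] [DecidableEq C]
    (T : ℕ) (Jset : I → Finset C)
    (hdisj : ∀ i k : I, i ≠ k → Disjoint (Jset i) (Jset k))
    (r : I → ℝ) (d : ℕ → C → ℝ) (hd : ∀ s j, 0 ≤ d s j)
    (sched : ℕ → Option I) (i' : I) (T' : Finset ℕ)
    (hT'sub : T' ⊆ Finset.Icc 1 T) (hT'card : 2 ≤ T'.card)
    (hT' : ∀ t, t ∈ T' ↔ sched t = some i') (hne : T'.Nonempty) :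
    reward T Jset r d (fun t => if t ∈ T' ∧ t ≠ T'.max' hne then none else sched t)
      = reward T Jset r d sched := by
  classical
  set M := T'.max' hne with hM
  set sched' : ℕ → Option I := fun t => if t ∈ T' ∧ t ≠ M then none else sched t with hs'
  have hMmem : M ∈ T' := T'.max'_mem hne
  have hMsched : sched M = some i' := (hT' M).1 hMmem
  have h1 : ∀ t ∈ T', 1 ≤ t := fun t ht => (Finset.mem_Icc.1 (hT'sub ht)).1
  -- capB characterizations
  have hcap_out : ∀ j, j ∉ Jset i' → ∀ s, capB Jset sched' j s = capB Jset sched j s := by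
    intro j hj s
    by_cases h : s ∈ T' ∧ s ≠ M
    · have h2 : sched s = some i' := (hT' s).1 h.1
      have : sched' s = none := by simp [hs', h]
      simp [capB, this, h2, hj]
    · have : sched' s = sched s := by simp [hs', h]
      simp [capB, this]
  have hjout : ∀ (i : I), i ≠ i' → ∀ j ∈ Jset i, j ∉ Jset i' := by
    intro i hi j hj
    exact fun hj' => Finset.disjoint_left.1 (hdisj i i' hi) hj hj'
  have hcap_in : ∀ j, j ∈ Jset i' → ∀ s, (capB Jset sched j s = true ↔ s ∈ T') := by
    intro j hj s
    constructor
    · intro h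
      rcases hi : sched s with _ | i
      · simp [capB, hi] at h
      · have hji : j ∈ Jset i := by simpa [capB, hi] using h
        by_cases hii : i = i'
        · exact (hT' s).2 (hii ▸ hi)
        · exact absurd hj (hjout i hii j hji)
    · intro h
      have h2 := (hT' s).1 h
      simp [capB, h2, hj]
  have hcap_in' : ∀ j, j ∈ Jset i' → ∀ s, (capB Jset sched' j s = true ↔ s = M) := by
    intro j hj s
    by_cases h : s ∈ T' ∧ s ≠ M
    · have : sched' s = none := by simp [hs', h]
      simp [capB, this]
      omega
    · have heq : sched' s = sched s := by simp [hs', h]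
      rw [show capB Jset sched' j s = capB Jset sched j s by simp [capB, heq],
        hcap_in j hj s]
      constructor
      · intro hs; by_contra hc; exact h ⟨hs, hc⟩
      · intro hs; exact hs ▸ hMmem
  -- prevCap facts
  have hprev_out : ∀ j, j ∉ Jset i' → ∀ t, prevCap Jset sched' j t = prevCap Jset sched j t := by
    intro j hj t
    unfold prevCap
    congr 1
    apply Finset.filter_congr
    intro s _
    simp [hcap_out j hj s]
  have hprevM : ∀ j, j ∈ Jset i' → prevCap Jset sched' j M = 0 := by
    intro j hj
    unfold prevCap
    convert Finset.sup_empty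
    rw [Finset.filter_eq_empty_iff]
    intro s hs
    rw [hcap_in' j hj s]
    exact fun h => by rw [h] at hs; exact absurd (Finset.mem_Ico.1 hs).2 (lt_irrefl M)
    exact Nat.bot_eq_zero.symm
  have hprev_in : ∀ j, j ∈ Jset i' → ∀ t,
      prevCap Jset sched j t = ((Finset.Ico 1 t).filter (· ∈ T')).sup id := by
    intro j hj t
    unfold prevCap
    congr 1
    apply Finset.filter_congr
    intro s _
    simp [hcap_in j hj s]
  -- split the reward sums
  unfold reward
  rw [← Finset.sum_sdiff hT'sub, ← Finset.sum_sdiff hT'sub]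
  congr 1
  · -- complement part
    apply Finset.sum_congr rfl
    intro t ht
    have htT : t ∉ T' := (Finset.mem_sdiff.1 ht).2
    have heq : sched' t = sched t := by simp [hs', htT]
    rw [heq]
    rcases hi : sched t with _ | i
    · rfl
    · simp only [Option.elim]
      congr 1
      apply Finset.sum_congr rfl
      intro j hj
      have hii : i ≠ i' := fun h => htT ((hT' t).2 (h ▸ hi))
      rw [hprev_out j (hjout i hii j hj) t]
  · -- T' part
    have hnewsum : ∀ t ∈ T', t ≠ M →
        (sched' t).elim (0:ℝ) (fun i =>
          r i * ∑ j ∈ Jset i, ∑ s ∈ Finset.Icc (prevCap Jset sched' j t + 1) t, d s j) = 0 := by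
      intro t ht htm
      have : sched' t = none := by simp [hs', ht, htm]
      rw [this]; rfl
    rw [Finset.sum_eq_single_of_mem M hMmem (fun t ht htm => hnewsum t ht htm)]
    have hsM : sched' M = some i' := by simp [hs', hMsched]
    rw [hsM, Option.elim_some]
    have : ∀ t ∈ T', (sched t).elim (0:ℝ) (fun i =>
        r i * ∑ j ∈ Jset i, ∑ s ∈ Finset.Icc (prevCap Jset sched j t + 1) t, d s j)
        = r i' * ∑ j ∈ Jset i', ∑ s ∈ Finset.Icc
            (((Finset.Ico 1 t).filter (· ∈ T')).sup id + 1) t, d s j := by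
      intro t ht
      rw [(hT' t).1 ht, Option.elim_some]
      congr 1
      apply Finset.sum_congr rfl
      intro j hj
      rw [hprev_in j hj t]
    rw [Finset.sum_congr rfl this, ← Finset.mul_sum, Finset.sum_comm]
    congr 1
    apply Finset.sum_congr rfl
    intro j hj
    rw [hprevM j hj, partition_sum T' hne h1]
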